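/- Suppose H : ℝ → (−π, π) is differentiable, strictly increasing, surjective, and satisfies H''(x) = −a·H'(x)·sin(H(x)) for all x with a constant a ∈ ℝ, and additionally H'(x) = a·cos(H(x)) + b for some constant b. Then a = b and there exist real constants A ≠ 0 and B with H(x) = 2·arctan(A·x + B) for all x. -/

import Mathlib

open Real Set Filter

theorem H_ode_characterisation (H : ℝ → ℝ) (a b : ℝ)
    (hmaps : ∀ x, H x ∈ Set.Ioo (-Real.pi) Real.pi)
    (hmono : StrictMono H)
    (hsurj : ∀ y ∈ Set.Ioo (-Real.pi) Real.pi, ∃ x, H x = y)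
    (hderiv : ∀ x, HasDerivAt H (a * Real.cos (H x) + b) x)
    (hderiv2 : ∀ x, HasDerivAt (deriv H) (-a * deriv H x * Real.sin (H x)) x) :
    a = b ∧ ∃ A B : ℝ, A ≠ 0 ∧ ∀ x, H x = 2 * Real.arctan (A * x + B) := by
  have hπ := Real.pi_pos
  -- derivative of a strictly monotone function is nonnegative
  have hd0 : ∀ x, 0 ≤ a * Real.cos (H x) + b := by
    intro x
    have h := (hderiv x)
    rw [hasDerivAt_iff_tendsto_slope] at h
    refine ge_of_tendsto h ?_
    filter_upwards [self_mem_nhdsWithin] with y (hy : y ≠ x)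
    rcases lt_or_gt_of_ne hy with h1 | h1
    · have := hmono h1
      simp only [slope_def_field, div_nonneg_iff]
      right; constructor <;> linarith
    · have := hmono h1
      simp only [slope_def_field, div_nonneg_iff]
      left; constructor <;> linarith
  -- a + b ≥ 0 (take H x = 0)
  obtain ⟨x₀, hx₀⟩ := hsurj 0 ⟨by linarith, hπ⟩
  have hab : 0 ≤ a + b := by
    have := hd0 x₀
    rw [hx₀] at this; simpa using this
  -- cos (H x / 2) positive
  have hcos : ∀ x, 0 < Real.cos (H x / 2) := fun x =>
    Real.cos_pos_of_mem_Ioo ⟨by linarith [(hmaps x).1], by linarith [(hmaps x).2]⟩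
  set g : ℝ → ℝ := fun x => Real.tan (H x / 2) with hgdef
  have hgd : ∀ x, HasDerivAt g ((a + b) / 2 + (b - a) / 2 * g x ^ 2) x := by
    intro x
    have h1 : HasDerivAt (fun x => H x / 2) ((a * Real.cos (H x) + b) / 2) x :=
      (hderiv x).div_const 2
    have h2 := (Real.hasDerivAt_tan (ne_of_gt (hcos x))).comp x h1
    convert h2 using 1
    case e'_4 => rfl
    case e'_5 => rfl
    case e'_8 => rfl
    have hc := (hcos x).ne'
    have hcosH : Real.cos (H x) = 2 * Real.cos (H x / 2) ^ 2 - 1 := by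
      rw [← Real.cos_two_mul]; congr 1; ring
    have htan2 : Real.tan (H x / 2) ^ 2 = (Real.cos (H x / 2) ^ 2)⁻¹ - 1 := by
      have h := Real.inv_one_add_tan_sq hc
      have h2 : 1 + Real.tan (H x / 2) ^ 2 = (Real.cos (H x / 2) ^ 2)⁻¹ := by
        rw [← h, inv_inv]
      linarith
    simp only [hgdef, hcosH, htan2]
    field_simp
    ring
  -- b ≤ a (otherwise g blows up in finite time)
  have hba : b ≤ a := by
    by_contra h
    push_neg at h
    set c : ℝ := (b - a) / 2 with hc
    have hcpos : 0 < c := by simp [hc]; linarith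
    -- point where H = π/2, so g = 1
    obtain ⟨x₁, hx₁⟩ := hsurj (Real.pi / 2) ⟨by linarith, by linarith⟩
    have hg1 : g x₁ = 1 := by
      simp only [hgdef, hx₁]
      rw [show Real.pi / 2 / 2 = Real.pi / 4 by ring, Real.tan_pi_div_four]
    -- g is monotone
    have hgmono : Monotone g := by
      refine monotone_of_deriv_nonneg (fun x => (hgd x).differentiableAt) ?_
      intro x
      rw [(hgd x).deriv]
      nlinarith [sq_nonneg (g x)]
    have hgge : ∀ x ∈ Set.Ici x₁, (1:ℝ) ≤ g x := fun x hx => hg1 ▸ hgmono hx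
    -- φ = -1/g has derivative ≥ c on Ici x₁
    set φ : ℝ → ℝ := fun x => -(g x)⁻¹ with hφ
    have hφd : ∀ x ∈ Set.Ici x₁, HasDerivAt φ
        (((a + b) / 2 + (b - a) / 2 * g x ^ 2) / g x ^ 2) x := by
      intro x hx
      have hgx : g x ≠ 0 := by have := hgge x hx; linarith
      have := ((hgd x).inv hgx).neg
      convert this using 1
      case e'_4 => rfl
      case e'_5 => rfl
      case e'_8 => rfl
      rw [hc]
      field_simp
    have hy : x₁ ≤ x₁ + 2 / c := by
      have h2c : 0 < 2 / c := by positivity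
      linarith
    have key := Convex.mul_sub_le_image_sub_of_le_deriv (convex_Ici x₁) (f := φ) (C := c)
      (fun x hx => (hφd x hx).continuousAt.continuousWithinAt)
      (fun x hx => ((hφd x (interior_subset hx)).differentiableAt).differentiableWithinAt)
      ?_ x₁ self_mem_Ici (x₁ + 2 / c) (Set.mem_Ici.mpr hy) hy
    · have hgy := hgge (x₁ + 2 / c) (Set.mem_Ici.mpr hy)
      have hφy : φ (x₁ + 2 / c) < 0 := by
        simp only [hφ, neg_lt, neg_zero]
        positivity
      have hφ1 : φ x₁ = -1 := by simp [hφ, hg1]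
      have e : c * (x₁ + 2 / c - x₁) = 2 := by field_simp; ring
      rw [hφ1, e] at key
      linarith
    · intro x hx
      rw [interior_Ici] at hx
      rw [(hφd x (Set.mem_Ici.mpr (le_of_lt hx))).deriv]
      have h1 : (1:ℝ) ≤ g x := hgge x (Set.mem_Ici.mpr (le_of_lt hx))
      rw [le_div_iff₀ (by nlinarith)]
      nlinarith [sq_nonneg (g x), sq_nonneg (g x ^ 2 - 1)]
  -- a ≤ b (otherwise derivative negative near π)
  have hab2 : a ≤ b := by
    by_contra h
    push_neg at h
    have hapos : 0 < a := by linarith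
    set t : ℝ := -(a + b) / (2 * a) with ht
    have ht1 : -1 < t := by rw [ht, neg_div, neg_lt_neg_iff, div_lt_one (by linarith)]; linarith
    have ht2 : t ≤ 0 := by
      rw [ht, neg_div]
      simp only [neg_nonpos]
      positivity
    obtain ⟨x₂, hx₂⟩ := hsurj (Real.arccos t)
      ⟨by linarith [Real.arccos_nonneg t], by
        rw [Real.arccos_eq_pi_div_two_sub_arcsin]
        have := Real.neg_pi_div_two_lt_arcsin.2 ht1
        linarith⟩
    have := hd0 x₂
    rw [hx₂, Real.cos_arccos (le_of_lt ht1) (by linarith)] at this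
    rw [ht] at this
    have : a * (-(a + b) / (2 * a)) + b = (b - a) / 2 := by field_simp; ring
    nlinarith [hd0 x₂, Real.cos_arccos (le_of_lt ht1) (ht2.trans zero_le_one)]
  have heq : a = b := le_antisymm hab2 hba
  subst heq
  refine ⟨rfl, a, g 0, ?_, ?_⟩
  · intro ha
    subst ha
    have hc : ∀ x, H x = H 0 := by
      intro x
      exact is_const_of_deriv_eq_zero (fun y => (hderiv y).differentiableAt)
        (fun y => by rw [(hderiv y).deriv]; ring) x 0
    have := hmono (show (0:ℝ) < 1 by norm_num)
    rw [hc 1] at this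
    exact lt_irrefl _ this
  · intro x
    have hconst : ∀ y, g y - a * y = g 0 - a * 0 := by
      intro y
      exact is_const_of_deriv_eq_zero
        (fun z => ((hgd z).sub ((hasDerivAt_id z).const_mul a)).differentiableAt)
        (fun z => by rw [((hgd z).sub ((hasDerivAt_id z).const_mul a)).deriv]; ring) y 0
    have hgx : g x = a * x + g 0 := by have := hconst x; simp at this; linarith
    have : Real.arctan (a * x + g 0) = H x / 2 := by
      rw [← hgx, hgdef]
      exact Real.arctan_tan (by linarith [(hmaps x).1]) (by linarith [(hmaps x).2])
    rw [this]; ring
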